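/- arXiv:1608.03032 — 3 statements merged into one kernel-verified Lean document; each statement's English description precedes it below -/
import Mathlib

section
/- Fix M ≥ 1 and nonzero reals δ₁,…,δ_M, and let p(b) = P( Σ_{k=1}^M W_k + (1/2) χ²_{M+1} > b ), where W₁,…,W_M, χ²_{M+1} are independent, χ²_{M+1} is chi-squared with M+1 degrees of freedom, and W_k is distributed as W(δ_k). Let b_ℓ → ∞ and y_ℓ → ∞ be sequences with log y_ℓ / log log b_ℓ → 0. Then P( χ²_{M+1} ≥ 2b_ℓ − y_ℓ ) / p(b_ℓ) → 0 as ℓ → ∞. -/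
open MeasureTheory ProbabilityTheory Filter Finset

noncomputable section

/-- Partial sum `S_j = X₁ + ⋯ + X_j` (so `S_0 = 0`). -/
def partialSum (x : ℕ → ℝ) (j : ℕ) : ℝ := ∑ l ∈ Finset.range j, x (l + 1)

/-- The statistic `Z_{i,j,k}`. -/
def Zstat (x : ℕ → ℝ) (i j k : ℕ) : ℝ :=
  (partialSum x j - partialSum x i
      - ((j : ℝ) - (i : ℝ)) * (partialSum x k - partialSum x i) / ((k : ℝ) - (i : ℝ))) /
    Real.sqrt (((j : ℝ) - (i : ℝ)) * (1 - ((j : ℝ) - (i : ℝ)) / ((k : ℝ) - (i : ℝ))))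

/-- Standard normal distribution function `Φ`. -/
def stdNormalCDF (x : ℝ) : ℝ := (ProbabilityTheory.gaussianReal 0 1 (Set.Iic x)).toReal

/-- The function `ν(x) = 2 x⁻² exp(−2 Σ_{n≥1} n⁻¹ Φ(−x√n/2))`. -/
def nuFn (x : ℝ) : ℝ :=
  2 * (x ^ 2)⁻¹ *
    Real.exp (-2 * ∑' n : ℕ, ((n : ℝ) + 1)⁻¹ *
      stdNormalCDF (-(x * Real.sqrt ((n : ℝ) + 1) / 2)))

/-- Chi-squared probability density with `d` degrees of freedom. -/
def chiSqPDF (d : ℕ) (y : ℝ) : ℝ :=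
  y ^ ((d : ℝ) / 2 - 1) * Real.exp (-y / 2) / (2 ^ ((d : ℝ) / 2) * Real.Gamma ((d : ℝ) / 2))

/-- Standard normal density `φ`. -/
def stdNormalPDF (x : ℝ) : ℝ := Real.exp (-x ^ 2 / 2) / Real.sqrt (2 * Real.pi)

/-- integral of exp(-(x/4)) on Ioi t. -/
lemma intExpQuarter (t : ℝ) : ∫ x in Set.Ioi t, Real.exp (-(x/4)) = 4 * Real.exp (-(t/4)) := by
  have hderiv : ∀ x ∈ Set.Ici t, HasDerivAt (fun x : ℝ => -4 * Real.exp (-(x/4)))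
      (Real.exp (-(x/4))) x := by
    intro x _
    have h1 : HasDerivAt (fun x : ℝ => -(x/4)) (-(1/4)) x := by
      simpa using ((hasDerivAt_id x).div_const 4).fun_neg
    have h2 := (h1.exp).const_mul (-4 : ℝ)
    refine h2.congr_deriv ?_
    ring
  have hint : IntegrableOn (fun x : ℝ => Real.exp (-(x/4))) (Set.Ioi t) := by
    have := exp_neg_integrableOn_Ioi t (show (0:ℝ) < 1/4 by norm_num)
    apply this.congr_fun _ measurableSet_Ioi
    intro x _
    norm_num
    ring
  have htend : Tendsto (fun x : ℝ => -4 * Real.exp (-(x/4))) atTop (nhds 0) := by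
    have h1 : Tendsto (fun x : ℝ => -(x/4)) atTop atBot := by
      apply tendsto_neg_atBot_iff.mpr
      exact tendsto_id.atTop_div_const (by norm_num)
    have := (Real.tendsto_exp_atBot.comp h1).const_mul (-4 : ℝ)
    simpa using this
  have := integral_Ioi_of_hasDerivAt_of_tendsto' hderiv hint htend
  rw [this]
  ring

/-- key monotonicity: x^p exp(-(x/4)) ≤ t^p exp(-(t/4)) for t ≤ x, 4p ≤ t. -/
lemma keyMono {p t x : ℝ} (hp : 0 ≤ p) (ht : 0 < t) (htx : t ≤ x) (hpt : 4 * p ≤ t) :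
    x ^ p * Real.exp (-(x/4)) ≤ t ^ p * Real.exp (-(t/4)) := by
  have hx0 : 0 < x := lt_of_lt_of_le ht htx
  rw [Real.rpow_def_of_pos hx0, Real.rpow_def_of_pos ht, ← Real.exp_add, ← Real.exp_add]
  apply Real.exp_le_exp.mpr
  have hlog : Real.log x - Real.log t ≤ (x - t) / t := by
    rw [← Real.log_div hx0.ne' ht.ne']
    have := Real.log_le_sub_one_of_pos (div_pos hx0 ht)
    have h2 : x / t - 1 = (x - t) / t := by field_simp
    linarith
  have h3 : p * (Real.log x - Real.log t) ≤ p * ((x - t) / t) :=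
    mul_le_mul_of_nonneg_left hlog hp
  have h4 : p * ((x - t) / t) ≤ (x - t) / 4 := by
    rw [mul_div_assoc', div_le_div_iff₀ ht (by norm_num : (0:ℝ) < 4)]
    nlinarith [sub_nonneg.mpr htx]
  nlinarith

/-- Gamma tail upper bound. -/
lemma gammaTailUB {a : ℝ} (ha : 1 ≤ a) {t : ℝ} (ht : 0 < t) (htp : 4 * (a - 1) ≤ t) :
    (gammaMeasure a (1/2) (Set.Ici t)).toReal ≤
      4 * ((1/2:ℝ) ^ a / Real.Gamma a) * t ^ (a-1) * Real.exp (-(t/2)) := by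
  have ha0 : 0 < a := lt_of_lt_of_le one_pos ha
  have hc0 : 0 < (1/2:ℝ) ^ a / Real.Gamma a := by
    apply div_pos (Real.rpow_pos_of_pos (by norm_num) _) (Real.Gamma_pos_of_pos ha0)
  set c₀ : ℝ := (1/2:ℝ) ^ a / Real.Gamma a with hc₀
  set C : ℝ := c₀ * t ^ (a-1) * Real.exp (-(t/4)) with hC
  have hCpos : 0 < C := by
    apply mul_pos (mul_pos hc0 (Real.rpow_pos_of_pos ht _)) (Real.exp_pos _)
  rw [gammaMeasure, withDensity_apply _ measurableSet_Ici]
  have hmono : ∫⁻ x in Set.Ici t, gammaPDF a (1/2) x ≤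
      ∫⁻ x in Set.Ici t, ENNReal.ofReal (C * Real.exp (-(x/4))) := by
    apply setLIntegral_mono
    · exact (((measurable_id.div_const 4).neg.exp).const_mul C).ennreal_ofReal
    · intro x hx
      have hxt : t ≤ x := hx
      have hx0 : 0 ≤ x := le_trans ht.le hxt
      rw [gammaPDF_of_nonneg hx0]
      apply ENNReal.ofReal_le_ofReal
      have hkey := keyMono (by linarith : (0:ℝ) ≤ a - 1) ht hxt htp
      have hexp : Real.exp (-(1/2 * x)) = Real.exp (-(x/4)) * Real.exp (-(x/4)) := by
        rw [← Real.exp_add]; ring_nf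
      rw [hexp, hC]
      have := mul_le_mul_of_nonneg_right hkey (Real.exp_pos (-(x/4))).le
      calc c₀ * x ^ (a-1) * (Real.exp (-(x/4)) * Real.exp (-(x/4)))
          = c₀ * ((x ^ (a-1) * Real.exp (-(x/4))) * Real.exp (-(x/4))) := by ring
        _ ≤ c₀ * ((t ^ (a-1) * Real.exp (-(t/4))) * Real.exp (-(x/4))) := by
            apply mul_le_mul_of_nonneg_left _ hc0.le
            exact this
        _ = c₀ * t ^ (a-1) * Real.exp (-(t/4)) * Real.exp (-(x/4)) := by ring
  have hint : IntegrableOn (fun x : ℝ => C * Real.exp (-(x/4))) (Set.Ici t) := by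
    rw [integrableOn_Ici_iff_integrableOn_Ioi]
    apply Integrable.const_mul
    have := exp_neg_integrableOn_Ioi t (show (0:ℝ) < 1/4 by norm_num)
    apply this.congr_fun _ measurableSet_Ioi
    intro x _
    norm_num
    ring
  have heq : ∫⁻ x in Set.Ici t, ENNReal.ofReal (C * Real.exp (-(x/4)))
      = ENNReal.ofReal (C * (4 * Real.exp (-(t/4)))) := by
    rw [← ofReal_integral_eq_lintegral_ofReal hint
      (ae_of_all _ fun x => by positivity)]
    congr 1
    rw [MeasureTheory.integral_Ici_eq_integral_Ioi, MeasureTheory.integral_const_mul,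
      intExpQuarter]
  calc (∫⁻ x in Set.Ici t, gammaPDF a (1/2) x).toReal
      ≤ (ENNReal.ofReal (C * (4 * Real.exp (-(t/4))))).toReal := by
        apply ENNReal.toReal_mono ENNReal.ofReal_ne_top
        rw [← heq]; exact hmono
    _ = C * (4 * Real.exp (-(t/4))) := ENNReal.toReal_ofReal (by positivity)
    _ = 4 * c₀ * t ^ (a-1) * (Real.exp (-(t/4)) * Real.exp (-(t/4))) := by rw [hC]; ring
    _ = 4 * c₀ * t ^ (a-1) * Real.exp (-(t/2)) := by rw [← Real.exp_add]; ring_nf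

/-- Gamma interval lower bound. -/
lemma gammaIocLB {a : ℝ} (ha : 1 ≤ a) {u v : ℝ} (hu : 0 < u) (huv : u ≤ v) :
    (v - u) * ((1/2:ℝ) ^ a / Real.Gamma a * u ^ (a-1) * Real.exp (-(v/2))) ≤
      (gammaMeasure a (1/2) (Set.Ioc u v)).toReal := by
  have ha0 : 0 < a := lt_of_lt_of_le one_pos ha
  have hc0 : 0 < (1/2:ℝ) ^ a / Real.Gamma a := by
    apply div_pos (Real.rpow_pos_of_pos (by norm_num) _) (Real.Gamma_pos_of_pos ha0)
  set c₀ : ℝ := (1/2:ℝ) ^ a / Real.Gamma a with hc₀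
  set c : ℝ := c₀ * u ^ (a-1) * Real.exp (-(v/2)) with hc
  have hcpos : 0 < c := by
    apply mul_pos (mul_pos hc0 (Real.rpow_pos_of_pos hu _)) (Real.exp_pos _)
  haveI : IsProbabilityMeasure (gammaMeasure a (1/2)) :=
    isProbabilityMeasure_gammaMeasure ha0 (by norm_num)
  have hmono : ∫⁻ x in Set.Ioc u v, ENNReal.ofReal c ≤
      ∫⁻ x in Set.Ioc u v, gammaPDF a (1/2) x := by
    apply setLIntegral_mono
    · exact (measurable_gammaPDFReal a (1/2)).ennreal_ofReal
    · intro x hx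
      have hx0 : 0 ≤ x := le_trans hu.le hx.1.le
      rw [gammaPDF_of_nonneg hx0]
      apply ENNReal.ofReal_le_ofReal
      rw [hc]
      have h1 : u ^ (a-1) ≤ x ^ (a-1) :=
        Real.rpow_le_rpow hu.le hx.1.le (by linarith)
      have h2 : Real.exp (-(v/2)) ≤ Real.exp (-(1/2 * x)) := by
        apply Real.exp_le_exp.mpr; linarith [hx.2]
      calc c₀ * u ^ (a-1) * Real.exp (-(v/2)) ≤ c₀ * x ^ (a-1) * Real.exp (-(v/2)) := by
            apply mul_le_mul_of_nonneg_right _ (Real.exp_pos _).le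
            exact mul_le_mul_of_nonneg_left h1 hc0.le
        _ ≤ c₀ * x ^ (a-1) * Real.exp (-(1/2 * x)) := by
            apply mul_le_mul_of_nonneg_left h2
            positivity
  have heq : ∫⁻ _x in Set.Ioc u v, ENNReal.ofReal c = ENNReal.ofReal (c * (v - u)) := by
    rw [setLIntegral_const, Real.volume_Ioc, ← ENNReal.ofReal_mul hcpos.le]
  rw [gammaMeasure, withDensity_apply _ measurableSet_Ioc]
  calc (v - u) * c = (ENNReal.ofReal (c * (v - u))).toReal := by
        rw [ENNReal.toReal_ofReal (by nlinarith)]; ring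
    _ ≤ (∫⁻ x in Set.Ioc u v, gammaPDF a (1/2) x).toReal := by
        apply ENNReal.toReal_mono
        · have : gammaMeasure a (1/2) (Set.Ioc u v) ≠ ⊤ := measure_ne_top _ _
          rwa [gammaMeasure, withDensity_apply _ measurableSet_Ioc] at this
        · rw [← heq]; exact hmono

set_option maxHeartbeats 1000000 in
/-- Claim B.3: for `p(b) = P(Σ W_k + χ²_{M+1}/2 > b)` with independent
`W_k ∼ W(δ_k)` and `χ²_{M+1}` chi-squared with `M+1` degrees of freedom, if `b_ℓ → ∞`,
`y_ℓ → ∞` and `log y_ℓ / log log b_ℓ → 0`, then `P(χ²_{M+1} ≥ 2b_ℓ − y_ℓ)/p(b_ℓ) → 0`. -/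
theorem statement7
    (M : ℕ) (hM : 1 ≤ M) (δ : Fin M → ℝ) (hδ : ∀ k, δ k ≠ 0)
    (Ω : Type*) [MeasurableSpace Ω] (P : Measure Ω) [IsProbabilityMeasure P]
    (W : Fin M → Ω → ℝ) (χ : Ω → ℝ)
    (hWmeas : ∀ k, Measurable (W k)) (hχmeas : Measurable χ)
    (hindep : iIndepFun
      (fun o => Option.elim o χ W) P)
    (hWnn : ∀ k ω, 0 ≤ W k ω)
    (hWlaw : ∀ k, ∀ x : ℝ, 0 ≤ x →
      (P {ω | x < W k ω}).toReal =
        2 * nuFn |δ k| * Real.exp (-x) - (nuFn |δ k|) ^ 2 * Real.exp (-2 * x))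
    (hχlaw : P.map χ = gammaMeasure (((M : ℝ) + 1) / 2) (1 / 2))
    (b y : ℕ → ℝ) (hb : Tendsto b atTop atTop) (hy : Tendsto y atTop atTop)
    (hyb : Tendsto (fun ℓ => Real.log (y ℓ) / Real.log (Real.log (b ℓ))) atTop (nhds 0)) :
    Tendsto (fun ℓ =>
      (P {ω | 2 * b ℓ - y ℓ ≤ χ ω}).toReal /
        (P {ω | b ℓ < (∑ k, W k ω) + χ ω / 2}).toReal)
      atTop (nhds 0) := by
  -- setup
  set a : ℝ := ((M : ℝ) + 1) / 2 with ha_def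
  have hM1 : (1:ℝ) ≤ (M:ℝ) := by exact_mod_cast hM
  have ha : 1 ≤ a := by rw [ha_def]; linarith
  have ha0 : 0 < a := lt_of_lt_of_le one_pos ha
  have hp0 : (0:ℝ) ≤ a - 1 := by linarith
  set c₀ : ℝ := (1/2:ℝ) ^ a / Real.Gamma a with hc₀_def
  have hc0 : 0 < c₀ :=
    div_pos (Real.rpow_pos_of_pos (by norm_num) _) (Real.Gamma_pos_of_pos ha0)
  set k₀ : Fin M := ⟨0, hM⟩ with hk₀_def
  set ν : ℝ := nuFn |δ k₀| with hν_def
  have hν : 0 < ν := by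
    rw [hν_def, nuFn]
    have h1 : 0 < |δ k₀| ^ 2 := pow_pos (abs_pos.mpr (hδ k₀)) 2
    exact mul_pos (mul_pos two_pos (inv_pos.mpr h1)) (Real.exp_pos _)
  set K : ℝ := 2 * c₀ * ν * Real.exp (-1) with hK_def
  have hK : 0 < K := by positivity
  set C' : ℝ := 32 * c₀ * (8:ℝ) ^ (a-1) / K with hC'_def
  have hC' : 0 ≤ C' := by positivity
  -- χ law on sets
  have hχset : ∀ s : Set ℝ, MeasurableSet s → P (χ ⁻¹' s) = gammaMeasure a (1/2) s := by
    intro s hs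
    rw [← Measure.map_apply hχmeas hs, hχlaw]
  -- independence of W k₀ and χ
  have hWχindep : IndepFun (W k₀) χ P := by
    have := hindep.indepFun (show (some k₀ : Option (Fin M)) ≠ none by simp)
    simpa using this
  -- W tail lower bound
  have hWtail : ∀ x : ℝ, 0 ≤ x → ν ≤ Real.exp x →
      ν * Real.exp (-x) ≤ (P (W k₀ ⁻¹' Set.Ioi x)).toReal := by
    intro x hx hνx
    have hset : W k₀ ⁻¹' Set.Ioi x = {ω | x < W k₀ ω} := rfl
    rw [hset, hWlaw k₀ x hx]
    simp only [← hν_def]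
    have he2 : Real.exp (-2 * x) = Real.exp (-x) * Real.exp (-x) := by
      rw [← Real.exp_add]; ring_nf
    have hone : Real.exp x * Real.exp (-x) = 1 := by
      rw [← Real.exp_add]; simp
    have hep : 0 < Real.exp (-x) := Real.exp_pos _
    have h1 : ν * Real.exp (-x) ≤ 1 := by nlinarith
    rw [he2]
    nlinarith [mul_pos hν hep, sq_nonneg (ν * Real.exp (-x))]
  -- eventual conditions
  have e1 : ∀ᶠ ℓ in atTop, 8 ≤ b ℓ := hb.eventually_ge_atTop 8
  have e2 : ∀ᶠ ℓ in atTop, 2 * Real.log ν ≤ b ℓ := hb.eventually_ge_atTop _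
  have e3 : ∀ᶠ ℓ in atTop, 4 * (a - 1) ≤ b ℓ := hb.eventually_ge_atTop _
  have e4 : ∀ᶠ ℓ in atTop, 1 ≤ y ℓ := hy.eventually_ge_atTop 1
  have e5 : ∀ᶠ ℓ in atTop, Real.log (y ℓ) / Real.log (Real.log (b ℓ)) < 1 := by
    apply hyb.eventually_lt_const
    norm_num
  -- y ≤ log b eventually
  have e6 : ∀ᶠ ℓ in atTop, y ℓ ≤ Real.log (b ℓ) := by
    filter_upwards [e1, e4, e5] with ℓ h8 hy1 hlt
    have hb0 : (0:ℝ) < b ℓ := by linarith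
    have hexp1 : Real.exp 1 < b ℓ := by
      have := Real.exp_one_lt_d9
      linarith
    have hlogb1 : 1 < Real.log (b ℓ) := (Real.lt_log_iff_exp_lt hb0).mpr hexp1
    have hloglog : 0 < Real.log (Real.log (b ℓ)) := Real.log_pos hlogb1
    have hlylt : Real.log (y ℓ) < Real.log (Real.log (b ℓ)) := by
      have := (div_lt_one hloglog).mp hlt
      linarith
    have hy0 : (0:ℝ) < y ℓ := by linarith
    calc y ℓ = Real.exp (Real.log (y ℓ)) := (Real.exp_log hy0).symm
      _ ≤ Real.exp (Real.log (Real.log (b ℓ))) := Real.exp_le_exp.mpr hlylt.le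
      _ = Real.log (b ℓ) := Real.exp_log (by linarith)
  -- the main eventual bound
  have hbound : ∀ᶠ ℓ in atTop,
      (P {ω | 2 * b ℓ - y ℓ ≤ χ ω}).toReal /
        (P {ω | b ℓ < (∑ k, W k ω) + χ ω / 2}).toReal
      ≤ C' * (b ℓ) ^ (-(1/2) : ℝ) := by
    filter_upwards [e1, e2, e3, e4, e6] with ℓ h8 hlogν hap hy1 hylog
    have hb0 : (0:ℝ) < b ℓ := by linarith
    have hlogb : Real.log (b ℓ) ≤ b ℓ := by
      have := Real.log_le_sub_one_of_pos hb0
      linarith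
    have hyB : y ℓ ≤ b ℓ := le_trans hylog hlogb
    -- numerator upper bound
    have ht0 : 0 < 2 * b ℓ - y ℓ := by linarith
    have htp : 4 * (a - 1) ≤ 2 * b ℓ - y ℓ := by linarith
    have hNset : {ω | 2 * b ℓ - y ℓ ≤ χ ω} = χ ⁻¹' Set.Ici (2 * b ℓ - y ℓ) := rfl
    have hN : (P {ω | 2 * b ℓ - y ℓ ≤ χ ω}).toReal ≤
        4 * c₀ * (2 * b ℓ - y ℓ) ^ (a-1) * Real.exp (-((2 * b ℓ - y ℓ)/2)) := by
      rw [hNset, hχset _ measurableSet_Ici]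
      exact gammaTailUB ha ht0 htp
    set Nup : ℝ := 4 * c₀ * (2 * b ℓ) ^ (a-1) * (Real.exp (-(b ℓ)) * Real.exp (y ℓ / 2))
      with hNup_def
    have hN2 : (P {ω | 2 * b ℓ - y ℓ ≤ χ ω}).toReal ≤ Nup := by
      refine le_trans hN ?_
      have h1 : (2 * b ℓ - y ℓ) ^ (a-1) ≤ (2 * b ℓ) ^ (a-1) :=
        Real.rpow_le_rpow ht0.le (by linarith) hp0
      have h2 : Real.exp (-((2 * b ℓ - y ℓ)/2)) = Real.exp (-(b ℓ)) * Real.exp (y ℓ / 2) := by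
        rw [← Real.exp_add]; ring_nf
      rw [hNup_def, ← h2]
      have h3 : 0 < Real.exp (-((2 * b ℓ - y ℓ)/2)) := Real.exp_pos _
      nlinarith [mul_le_mul_of_nonneg_right h1 h3.le, hc0]
    have hNup0 : 0 ≤ Nup := by positivity
    -- denominator lower bound
    set n : ℕ := ⌊b ℓ / 4⌋₊ with hn_def
    have hn1 : 1 ≤ n := by
      apply Nat.le_floor
      push_cast
      linarith
    have hnb : (n:ℝ) ≤ b ℓ / 4 := Nat.floor_le (by positivity)
    have hnlb : b ℓ / 8 ≤ (n:ℝ) := by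
      have := Nat.lt_floor_add_one (b ℓ / 4)
      rw [← hn_def] at this
      linarith
    have hn0 : (1:ℝ) ≤ (n:ℝ) := by exact_mod_cast hn1
    set E : ℕ → Set Ω := fun i =>
      (W k₀ ⁻¹' Set.Ioi (b ℓ - (i:ℝ))) ∩ (χ ⁻¹' Set.Ioc (2*(i:ℝ)) (2*(i:ℝ)+2)) with hE_def
    have hEmeas : ∀ i, MeasurableSet (E i) := fun i =>
      ((hWmeas k₀) measurableSet_Ioi).inter (hχmeas measurableSet_Ioc)
    have hsub : ∀ i ∈ Finset.Ico n (2*n), E i ⊆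
        {ω | b ℓ < (∑ k, W k ω) + χ ω / 2} := by
      intro i _ ω hω
      obtain ⟨hw, hχω⟩ := hω
      have hw' : b ℓ - (i:ℝ) < W k₀ ω := hw
      have hχ1 : 2*(i:ℝ) < χ ω := hχω.1
      have hsum : W k₀ ω ≤ ∑ k, W k ω :=
        Finset.single_le_sum (fun k _ => hWnn k ω) (Finset.mem_univ k₀)
      simp only [Set.mem_setOf_eq]
      linarith
    have hdisj : (↑(Finset.Ico n (2*n)) : Set ℕ).PairwiseDisjoint E := by
      intro i _ j _ hij
      apply Set.disjoint_left.mpr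
      intro ω hωi hωj
      have h1 := hωi.2
      have h2 := hωj.2
      rcases lt_or_gt_of_ne hij with h | h
      · have hij' : (i:ℝ) + 1 ≤ (j:ℝ) := by exact_mod_cast h
        have := h1.2
        have := h2.1
        simp only [Set.mem_preimage, Set.mem_Ioc] at h1 h2
        linarith [h1.2, h2.1]
      · have hij' : (j:ℝ) + 1 ≤ (i:ℝ) := by exact_mod_cast h
        simp only [Set.mem_preimage, Set.mem_Ioc] at h1 h2
        linarith [h1.1, h2.2]
    have hunion : P (⋃ i ∈ Finset.Ico n (2*n), E i) = ∑ i ∈ Finset.Ico n (2*n), P (E i) :=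
      measure_biUnion_finset hdisj (fun i _ => hEmeas i)
    have hD1 : ∑ i ∈ Finset.Ico n (2*n), (P (E i)).toReal ≤
        (P {ω | b ℓ < (∑ k, W k ω) + χ ω / 2}).toReal := by
      rw [← ENNReal.toReal_sum (fun i _ => measure_ne_top P _), ← hunion]
      exact ENNReal.toReal_mono (measure_ne_top P _)
        (measure_mono (Set.iUnion₂_subset hsub))
    -- per-term lower bound
    have hterm : ∀ i ∈ Finset.Ico n (2*n),
        K * (2*(n:ℝ)) ^ (a-1) * Real.exp (-(b ℓ)) ≤ (P (E i)).toReal := by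
      intro i hi
      obtain ⟨hi1, hi2⟩ := Finset.mem_Ico.mp hi
      have hin : (n:ℝ) ≤ (i:ℝ) := by exact_mod_cast hi1
      have hi2' : (i:ℝ) + 1 ≤ 2*(n:ℝ) := by exact_mod_cast hi2
      have hbi : b ℓ / 2 ≤ b ℓ - (i:ℝ) := by linarith
      have hprod : P (E i) =
          P (W k₀ ⁻¹' Set.Ioi (b ℓ - (i:ℝ))) * P (χ ⁻¹' Set.Ioc (2*(i:ℝ)) (2*(i:ℝ)+2)) :=
        hWχindep.measure_inter_preimage_eq_mul _ _ measurableSet_Ioi measurableSet_Ioc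
      rw [hE_def, hprod, ENNReal.toReal_mul]
      have hx0 : (0:ℝ) ≤ b ℓ - (i:ℝ) := by linarith
      have hνx : ν ≤ Real.exp (b ℓ - (i:ℝ)) := by
        calc ν = Real.exp (Real.log ν) := (Real.exp_log hν).symm
          _ ≤ Real.exp (b ℓ - (i:ℝ)) := Real.exp_le_exp.mpr (by linarith)
      have hW1 : ν * Real.exp (-(b ℓ - (i:ℝ))) ≤
          (P (W k₀ ⁻¹' Set.Ioi (b ℓ - (i:ℝ)))).toReal := hWtail _ hx0 hνx
      have h2i : (0:ℝ) < 2*(i:ℝ) := by linarith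
      have hG := gammaIocLB ha h2i (by linarith : 2*(i:ℝ) ≤ 2*(i:ℝ)+2)
      rw [← hχset _ measurableSet_Ioc] at hG
      have h2eq : (2*(i:ℝ)+2) - 2*(i:ℝ) = 2 := by ring
      rw [h2eq] at hG
      have hexp : Real.exp (-(b ℓ - (i:ℝ))) * Real.exp (-((2*(i:ℝ)+2)/2)) =
          Real.exp (-1) * Real.exp (-(b ℓ)) := by
        rw [← Real.exp_add, ← Real.exp_add]; ring_nf
      have hmon : (2*(n:ℝ)) ^ (a-1) ≤ (2*(i:ℝ)) ^ (a-1) :=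
        Real.rpow_le_rpow (by linarith) (by linarith) hp0
      calc K * (2*(n:ℝ)) ^ (a-1) * Real.exp (-(b ℓ))
          ≤ K * (2*(i:ℝ)) ^ (a-1) * Real.exp (-(b ℓ)) := by
            have := mul_le_mul_of_nonneg_left hmon hK.le
            nlinarith [Real.exp_pos (-(b ℓ))]
        _ = (ν * Real.exp (-(b ℓ - (i:ℝ)))) *
            (2 * (c₀ * (2*(i:ℝ)) ^ (a-1) * Real.exp (-((2*(i:ℝ)+2)/2)))) := by
            rw [hK_def]
            linear_combination (-(2 * c₀ * ν * ((2*(i:ℝ)) ^ (a-1)))) * hexp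
        _ ≤ (P (W k₀ ⁻¹' Set.Ioi (b ℓ - (i:ℝ)))).toReal *
            (P (χ ⁻¹' Set.Ioc (2*(i:ℝ)) (2*(i:ℝ)+2))).toReal := by
            apply mul_le_mul hW1 hG (by positivity) ENNReal.toReal_nonneg
    -- sum lower bound
    have hDsum : (n:ℝ) * (K * (2*(n:ℝ)) ^ (a-1) * Real.exp (-(b ℓ))) ≤
        ∑ i ∈ Finset.Ico n (2*n), (P (E i)).toReal := by
      have := Finset.sum_le_sum hterm
      rw [Finset.sum_const, Nat.card_Ico] at this
      have hcard : 2*n - n = n := by omega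
      rw [hcard, nsmul_eq_mul] at this
      exact this
    set Dlow : ℝ := b ℓ / 8 * (K * (b ℓ / 4) ^ (a-1) * Real.exp (-(b ℓ))) with hDlow_def
    have hDlow0 : 0 < Dlow := by positivity
    have hD2 : Dlow ≤ (P {ω | b ℓ < (∑ k, W k ω) + χ ω / 2}).toReal := by
      refine le_trans ?_ (le_trans hDsum hD1)
      rw [hDlow_def]
      have hmon2 : (b ℓ / 4) ^ (a-1) ≤ (2*(n:ℝ)) ^ (a-1) :=
        Real.rpow_le_rpow (by positivity) (by linarith) hp0
      have hpos : (0:ℝ) < (2*(n:ℝ)) ^ (a-1) := Real.rpow_pos_of_pos (by linarith) _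
      have he : (0:ℝ) < Real.exp (-(b ℓ)) := Real.exp_pos _
      calc b ℓ / 8 * (K * (b ℓ / 4) ^ (a-1) * Real.exp (-(b ℓ)))
          ≤ b ℓ / 8 * (K * (2*(n:ℝ)) ^ (a-1) * Real.exp (-(b ℓ))) := by
            apply mul_le_mul_of_nonneg_left _ (by linarith : (0:ℝ) ≤ b ℓ / 8)
            exact mul_le_mul_of_nonneg_right (mul_le_mul_of_nonneg_left hmon2 hK.le) he.le
        _ ≤ (n:ℝ) * (K * (2*(n:ℝ)) ^ (a-1) * Real.exp (-(b ℓ))) :=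
            mul_le_mul_of_nonneg_right hnlb (by positivity)
    -- combine
    have hrat : (P {ω | 2 * b ℓ - y ℓ ≤ χ ω}).toReal /
        (P {ω | b ℓ < (∑ k, W k ω) + χ ω / 2}).toReal ≤ Nup / Dlow :=
      div_le_div₀ hNup0 hN2 hDlow0 hD2
    refine le_trans hrat ?_
    rw [div_le_iff₀ hDlow0]
    have e8 : (2 * b ℓ) ^ (a-1) = (8:ℝ) ^ (a-1) * (b ℓ / 4) ^ (a-1) := by
      rw [← Real.mul_rpow (by norm_num) (by positivity)]
      congr 1
      ring
    have e9 : Real.exp (y ℓ / 2) ≤ b ℓ ^ ((1:ℝ)/2) := by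
      rw [Real.rpow_def_of_pos hb0]
      exact Real.exp_le_exp.mpr (by linarith)
    have e10 : b ℓ ^ (-(1/2):ℝ) * b ℓ = b ℓ ^ ((1:ℝ)/2) := by
      nth_rewrite 2 [← Real.rpow_one (b ℓ)]
      rw [← Real.rpow_add hb0]
      norm_num
    calc Nup = 4 * c₀ * (8:ℝ)^(a-1) * (b ℓ / 4)^(a-1) * Real.exp (-(b ℓ)) *
          Real.exp (y ℓ / 2) := by rw [hNup_def, e8]; ring
      _ ≤ 4 * c₀ * (8:ℝ)^(a-1) * (b ℓ / 4)^(a-1) * Real.exp (-(b ℓ)) *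
          (b ℓ ^ ((1:ℝ)/2)) := by
          apply mul_le_mul_of_nonneg_left e9 (by positivity)
      _ = C' * b ℓ ^ (-(1/2):ℝ) * Dlow := by
          rw [← e10, hC'_def, hDlow_def]
          field_simp
          ring
  -- squeeze
  have hg : Tendsto (fun ℓ => C' * (b ℓ) ^ (-(1/2) : ℝ)) atTop (nhds 0) := by
    have := ((tendsto_rpow_neg_atTop (show (0:ℝ) < 1/2 by norm_num)).comp hb).const_mul C'
    simpa using this
  exact squeeze_zero' (Eventually.of_forall fun ℓ =>
    div_nonneg ENNReal.toReal_nonneg ENNReal.toReal_nonneg) hbound hg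


end
end

section
/- Let 0 < c₁ ≤ c₂ be constants and define, for b > 0 and m ∈ ℕ, p(b,m) = (1/4) b⁶ f₁(b²) · Σ_{u,v ∈ {1,…,m}, u+v ≤ m} [(m − u − v)/(u v (u+v))] · ν(b √(u/(v(u+v)))) · ν(b √(v/(u(u+v)))) · ν(b √((u+v)/(u v))). Then there exist constants 0 < C₁ ≤ C₂ and b₀ such that for all b ≥ b₀ and all m with c₁ b² ≤ m ≤ c₂ b²: C₁ b⁵ φ(b) ≤ p(b,m) ≤ C₂ b⁵ φ(b); in particular p(b,m) → 0 as b → ∞ in this regime. -/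
set_option maxHeartbeats 2000000

open MeasureTheory ProbabilityTheory Filter Finset

noncomputable section

/-- The right-hand side of the approximation (2.1). -/
def rhs21 (b : ℝ) (m : ℕ) : ℝ :=
  (1 / 4) * b ^ 6 * chiSqPDF 1 (b ^ 2) *
    ∑ u ∈ Finset.Icc 1 m, ∑ v ∈ Finset.Icc 1 m,
      (if u + v ≤ m then
        ((m : ℝ) - (u : ℝ) - (v : ℝ)) / ((u : ℝ) * v * (u + v)) *
          nuFn (b * Real.sqrt ((u : ℝ) / ((v : ℝ) * ((u : ℝ) + v)))) *
          nuFn (b * Real.sqrt ((v : ℝ) / ((u : ℝ) * ((u : ℝ) + v)))) *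
          nuFn (b * Real.sqrt (((u : ℝ) + v) / ((u : ℝ) * v)))
      else 0)

/-! ### Auxiliary lemmas -/

lemma stdNormalCDF_nonneg (x : ℝ) : 0 ≤ stdNormalCDF x := ENNReal.toReal_nonneg

lemma stdNormalCDF_mono {x y : ℝ} (h : x ≤ y) : stdNormalCDF x ≤ stdNormalCDF y := by
  refine ENNReal.toReal_mono (measure_ne_top _ _) (measure_mono (Set.Iic_subset_Iic.mpr h))

lemma stdNormalCDF_eq (x : ℝ) :
    stdNormalCDF x = ∫ t in Set.Iic x, gaussianPDFReal 0 1 t := by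
  rw [stdNormalCDF, gaussianReal_apply_eq_integral _ one_ne_zero,
    ENNReal.toReal_ofReal]
  exact setIntegral_nonneg measurableSet_Iic fun t _ => gaussianPDFReal_nonneg _ _ _

lemma integral_exp_neg_mul_Ioi {y a : ℝ} (hy : 0 < y) :
    ∫ x in Set.Ioi a, Real.exp (-(y * x)) = y⁻¹ * Real.exp (-(y * a)) := by
  have := integral_comp_mul_left_Ioi (fun t => Real.exp (-t)) a hy
  simp only [smul_eq_mul] at this
  rw [this, integral_exp_neg_Ioi]

lemma stdNormalCDF_tail {y : ℝ} (hy : 0 < y) :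
    stdNormalCDF (-y) ≤ Real.exp (-y^2/2) / y := by
  rw [stdNormalCDF_eq, ← integral_comp_neg_Ioi]
  have hb : ∀ x ∈ Set.Ioi y, gaussianPDFReal 0 1 (-x) ≤ Real.exp (y^2/2) * Real.exp (-(y*x)) := by
    intro x _
    rw [gaussianPDFReal]
    rw [← Real.exp_add]
    have h1 : (√(2 * Real.pi * (1:NNReal)))⁻¹ ≤ 1 := by
      rw [NNReal.coe_one, mul_one]
      rw [inv_le_one_iff₀]
      right
      rw [show (1:ℝ) = Real.sqrt 1 by simp]
      apply Real.sqrt_le_sqrt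
      nlinarith [Real.pi_gt_three]
    calc (√(2 * Real.pi * (1:NNReal)))⁻¹ * Real.exp (-(-x - 0)^2/(2*(1:NNReal)))
        ≤ 1 * Real.exp (y^2/2 + -(y*x)) := by
          apply mul_le_mul h1 _ (Real.exp_nonneg _) zero_le_one
          apply Real.exp_le_exp.mpr
          push_cast
          nlinarith [sq_nonneg (x - y)]
      _ = Real.exp (y^2/2 + -(y*x)) := one_mul _
  calc (∫ x in Set.Ioi y, gaussianPDFReal 0 1 (-x))
      ≤ ∫ x in Set.Ioi y, Real.exp (y^2/2) * Real.exp (-(y*x)) := by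
        apply setIntegral_mono_on _ _ measurableSet_Ioi hb
        · exact ((integrable_gaussianPDFReal 0 1).comp_neg).integrableOn
        · exact (by simpa [neg_mul] using (exp_neg_integrableOn_Ioi y hy).const_mul (Real.exp (y^2/2)) :
            Integrable (fun x => Real.exp (y^2/2) * Real.exp (-(y * x))) (volume.restrict (Set.Ioi y)))
    _ = Real.exp (y^2/2) * (y⁻¹ * Real.exp (-(y*y))) := by
        rw [integral_const_mul, integral_exp_neg_mul_Ioi hy]
    _ = (Real.exp (y^2/2) * Real.exp (-(y*y))) * y⁻¹ := by ring
    _ = Real.exp (-y^2/2) / y := by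
        rw [← Real.exp_add, div_eq_mul_inv]
        ring_nf

lemma nuFn_nonneg (x : ℝ) : 0 ≤ nuFn x := by
  unfold nuFn; positivity

lemma nuFn_le {x : ℝ} : nuFn x ≤ 2 * (x^2)⁻¹ := by
  unfold nuFn
  have h1 : Real.exp (-2 * ∑' n : ℕ, ((n : ℝ) + 1)⁻¹ *
      stdNormalCDF (-(x * Real.sqrt ((n : ℝ) + 1) / 2))) ≤ 1 := by
    rw [Real.exp_le_one_iff]
    have : 0 ≤ ∑' n : ℕ, ((n : ℝ) + 1)⁻¹ *
        stdNormalCDF (-(x * Real.sqrt ((n : ℝ) + 1) / 2)) :=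
      tsum_nonneg fun n => mul_nonneg (by positivity) (stdNormalCDF_nonneg _)
    linarith
  nlinarith [inv_nonneg.mpr (sq_nonneg x), h1]

lemma nuFn_lower (a A : ℝ) (ha : 0 < a) (haA : a ≤ A) :
    ∃ δ : ℝ, 0 < δ ∧ ∀ x : ℝ, a ≤ x → x ≤ A → δ ≤ nuFn x := by
  have hr0 : (0:ℝ) ≤ Real.exp (-(a^2/8)) := Real.exp_nonneg _
  have hr1 : Real.exp (-(a^2/8)) < 1 := Real.exp_lt_one_iff.mpr (by nlinarith)
  have hMsum : Summable (fun n : ℕ => (2/a) * Real.exp (-(a^2*((n:ℝ)+1))/8)) := by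
    have h1 : Summable (fun n : ℕ => ((2/a) * Real.exp (-(a^2/8))) * Real.exp (-(a^2/8)) ^ n) :=
      (summable_geometric_of_lt_one hr0 hr1).mul_left _
    refine h1.congr fun n => ?_
    rw [mul_assoc, ← Real.exp_nat_mul, ← Real.exp_add]
    congr 2
    ring
  set K : ℝ := ∑' n : ℕ, (2/a) * Real.exp (-(a^2*((n:ℝ)+1))/8) with hK
  have hA : 0 < A := ha.trans_le haA
  refine ⟨2 * (A^2)⁻¹ * Real.exp (-2 * K), by positivity, fun x hax hxA => ?_⟩
  have hx : 0 < x := ha.trans_le hax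
  have hterm : ∀ n : ℕ, ((n : ℝ) + 1)⁻¹ *
      stdNormalCDF (-(x * Real.sqrt ((n : ℝ) + 1) / 2)) ≤
        (2/a) * Real.exp (-(a^2*((n:ℝ)+1))/8) := by
    intro n
    have hn0 : (0:ℝ) ≤ (n:ℝ) := Nat.cast_nonneg n
    have hn1 : (1:ℝ) ≤ (n:ℝ) + 1 := by linarith
    have hs1 : (1:ℝ) ≤ Real.sqrt ((n:ℝ)+1) := by
      nlinarith [Real.sq_sqrt (show (0:ℝ) ≤ (n:ℝ)+1 by linarith), Real.sqrt_nonneg ((n:ℝ)+1)]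
    have hy0 : 0 < a * Real.sqrt ((n:ℝ)+1) / 2 := by positivity
    have h2 : stdNormalCDF (-(x * Real.sqrt ((n:ℝ)+1) / 2)) ≤
        stdNormalCDF (-(a * Real.sqrt ((n:ℝ)+1) / 2)) := by
      apply stdNormalCDF_mono
      have : a * Real.sqrt ((n:ℝ)+1) ≤ x * Real.sqrt ((n:ℝ)+1) :=
        mul_le_mul_of_nonneg_right hax (Real.sqrt_nonneg _)
      linarith
    have h3 := stdNormalCDF_tail hy0
    have hysq : (a * Real.sqrt ((n:ℝ)+1) / 2)^2 = a^2 * ((n:ℝ)+1) / 4 := by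
      rw [div_pow, mul_pow, Real.sq_sqrt (by positivity : (0:ℝ) ≤ (n:ℝ)+1)]
      ring
    have h4 : Real.exp (-(a * Real.sqrt ((n:ℝ)+1) / 2)^2/2) / (a * Real.sqrt ((n:ℝ)+1) / 2)
        ≤ (2/a) * Real.exp (-(a^2*((n:ℝ)+1))/8) := by
      rw [hysq, show -(a ^ 2 * ((n:ℝ) + 1) / 4) / 2 = -(a^2*((n:ℝ)+1))/8 by ring,
        div_eq_mul_inv, mul_comm]
      apply mul_le_mul_of_nonneg_right _ (Real.exp_nonneg _)
      have hle : a / 2 ≤ a * Real.sqrt ((n:ℝ)+1) / 2 := by nlinarith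
      calc (a * Real.sqrt ((n:ℝ)+1)/2)⁻¹ ≤ (a/2)⁻¹ := inv_anti₀ (by positivity) hle
        _ = 2/a := by rw [inv_div]
    have h5 : ((n : ℝ) + 1)⁻¹ ≤ 1 := by
      rw [inv_le_one_iff₀]; right; exact hn1
    calc ((n : ℝ) + 1)⁻¹ * stdNormalCDF (-(x * Real.sqrt ((n : ℝ) + 1) / 2))
        ≤ 1 * stdNormalCDF (-(a * Real.sqrt ((n:ℝ)+1) / 2)) :=
          mul_le_mul h5 h2 (stdNormalCDF_nonneg _) zero_le_one
      _ ≤ (2/a) * Real.exp (-(a^2*((n:ℝ)+1))/8) := by rw [one_mul]; exact h3.trans h4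
  have hsumx : Summable (fun n : ℕ => ((n : ℝ) + 1)⁻¹ *
      stdNormalCDF (-(x * Real.sqrt ((n : ℝ) + 1) / 2))) :=
    Summable.of_nonneg_of_le
      (fun n => mul_nonneg (by positivity) (stdNormalCDF_nonneg _)) hterm hMsum
  have hT : (∑' n : ℕ, ((n : ℝ) + 1)⁻¹ *
      stdNormalCDF (-(x * Real.sqrt ((n : ℝ) + 1) / 2))) ≤ K :=
    Summable.tsum_le_tsum hterm hsumx hMsum
  unfold nuFn
  have e1 : Real.exp (-2 * K) ≤ Real.exp (-2 * ∑' n : ℕ, ((n : ℝ) + 1)⁻¹ *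
      stdNormalCDF (-(x * Real.sqrt ((n : ℝ) + 1) / 2))) := by
    apply Real.exp_le_exp.mpr
    linarith
  have e2 : (A^2)⁻¹ ≤ (x^2)⁻¹ := by
    apply inv_anti₀ (by positivity)
    nlinarith
  calc 2 * (A^2)⁻¹ * Real.exp (-2 * K)
      ≤ 2 * (x^2)⁻¹ * Real.exp (-2 * K) := by
        apply mul_le_mul_of_nonneg_right _ (Real.exp_nonneg _)
        linarith
    _ ≤ 2 * (x^2)⁻¹ * Real.exp (-2 * ∑' n : ℕ, ((n : ℝ) + 1)⁻¹ *
        stdNormalCDF (-(x * Real.sqrt ((n : ℝ) + 1) / 2))) := by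
        apply mul_le_mul_of_nonneg_left e1 (by positivity)

lemma chiSq_eq {b : ℝ} (hb : 0 < b) : chiSqPDF 1 (b^2) = stdNormalPDF b / b := by
  unfold chiSqPDF stdNormalPDF
  have h1 : ((1:ℕ):ℝ)/2 - 1 = -(1/2 : ℝ) := by norm_num
  have h2 : (b^2 : ℝ) ^ (-(1/2:ℝ)) = b⁻¹ := by
    rw [← Real.rpow_natCast b 2, ← Real.rpow_mul hb.le]
    norm_num
    rw [Real.rpow_neg_one]
  have h3 : (2:ℝ) ^ (((1:ℕ):ℝ)/2) = Real.sqrt 2 := by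
    rw [Real.sqrt_eq_rpow]; norm_num
  have h4 : Real.Gamma (((1:ℕ):ℝ)/2) = Real.sqrt Real.pi := by
    norm_num [Real.Gamma_one_half_eq]
  rw [h1, h2, h3, h4] at *
  rw [← Real.sqrt_mul (by norm_num : (0:ℝ) ≤ 2)]
  field_simp

lemma nuFn_sqrt_le {b r : ℝ} (hb : 0 < b) (hr : 0 < r) :
    nuFn (b * Real.sqrt r) ≤ 2 / (b^2 * r) := by
  have h : (b * Real.sqrt r)^2 = b^2 * r := by
    rw [mul_pow, Real.sq_sqrt hr.le]
  calc nuFn (b * Real.sqrt r) ≤ 2 * (((b * Real.sqrt r))^2)⁻¹ := nuFn_le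
    _ = 2 / (b^2 * r) := by rw [h, div_eq_mul_inv]

lemma term_le {b : ℝ} (hb : 0 < b) {u v m : ℕ} (hu : 1 ≤ u) (hv : 1 ≤ v) (huv : u + v ≤ m) :
    ((m : ℝ) - (u : ℝ) - (v : ℝ)) / ((u : ℝ) * v * (u + v)) *
        nuFn (b * Real.sqrt ((u : ℝ) / ((v : ℝ) * ((u : ℝ) + v)))) *
        nuFn (b * Real.sqrt ((v : ℝ) / ((u : ℝ) * ((u : ℝ) + v)))) *
        nuFn (b * Real.sqrt (((u : ℝ) + v) / ((u : ℝ) * v)))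
      ≤ 8 * (m : ℝ) / b ^ 6 := by
  set U := (u : ℝ) with hU
  set V := (v : ℝ) with hV
  have hU1 : 1 ≤ U := by rw [hU]; exact_mod_cast hu
  have hV1 : 1 ≤ V := by rw [hV]; exact_mod_cast hv
  have hU0 : 0 < U := by linarith
  have hV0 : 0 < V := by linarith
  have hm : U + V ≤ (m : ℝ) := by
    rw [hU, hV]; exact_mod_cast huv
  have hr1 : 0 < U / (V * (U + V)) := by positivity
  have hr2 : 0 < V / (U * (U + V)) := by positivity
  have hr3 : 0 < (U + V) / (U * V) := by positivity
  have n1 := nuFn_sqrt_le hb hr1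
  have n2 := nuFn_sqrt_le hb hr2
  have n3 := nuFn_sqrt_le hb hr3
  have hcoeff : ((m : ℝ) - U - V) / (U * V * (U + V)) ≤ (m : ℝ) / (U * V * (U + V)) := by
    gcongr
    linarith
  calc ((m : ℝ) - U - V) / (U * V * (U + V)) *
        nuFn (b * Real.sqrt (U / (V * (U + V)))) *
        nuFn (b * Real.sqrt (V / (U * (U + V)))) *
        nuFn (b * Real.sqrt ((U + V) / (U * V)))
      ≤ ((m : ℝ) / (U * V * (U + V))) * (2 / (b^2 * (U / (V * (U + V))))) *
          (2 / (b^2 * (V / (U * (U + V))))) * (2 / (b^2 * ((U + V) / (U * V)))) := by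
        have c0 : 0 ≤ ((m : ℝ) - U - V) / (U * V * (U + V)) := by
          apply div_nonneg _ (by positivity)
          linarith
        gcongr ?_ * ?_ * ?_ * ?_ <;>
          first
            | exact nuFn_nonneg _
            | assumption
    _ = 8 * (m : ℝ) / b ^ 6 := by
        field_simp
        ring

/-- the inner double sum of `rhs21`. -/
def dsum (b : ℝ) (m : ℕ) : ℝ :=
  ∑ u ∈ Finset.Icc 1 m, ∑ v ∈ Finset.Icc 1 m,
    (if u + v ≤ m then
      ((m : ℝ) - (u : ℝ) - (v : ℝ)) / ((u : ℝ) * v * (u + v)) *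
        nuFn (b * Real.sqrt ((u : ℝ) / ((v : ℝ) * ((u : ℝ) + v)))) *
        nuFn (b * Real.sqrt ((v : ℝ) / ((u : ℝ) * ((u : ℝ) + v)))) *
        nuFn (b * Real.sqrt (((u : ℝ) + v) / ((u : ℝ) * v)))
    else 0)

lemma rhs21_eq (b : ℝ) (m : ℕ) :
    rhs21 b m = (1 / 4) * b ^ 6 * chiSqPDF 1 (b ^ 2) * dsum b m := rfl

lemma dsum_le {b : ℝ} (hb : 0 < b) (m : ℕ) :
    dsum b m ≤ 8 * (m : ℝ)^3 / b ^ 6 := by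
  have key : ∀ u ∈ Finset.Icc 1 m, ∀ v ∈ Finset.Icc 1 m,
      (if u + v ≤ m then
        ((m : ℝ) - (u : ℝ) - (v : ℝ)) / ((u : ℝ) * v * (u + v)) *
          nuFn (b * Real.sqrt ((u : ℝ) / ((v : ℝ) * ((u : ℝ) + v)))) *
          nuFn (b * Real.sqrt ((v : ℝ) / ((u : ℝ) * ((u : ℝ) + v)))) *
          nuFn (b * Real.sqrt (((u : ℝ) + v) / ((u : ℝ) * v)))
      else 0) ≤ 8 * (m : ℝ) / b ^ 6 := by
    intro u hu v hv
    rw [Finset.mem_Icc] at hu hv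
    split
    · exact term_le hb hu.1 hv.1 (by assumption)
    · positivity
  calc dsum b m ≤ ∑ u ∈ Finset.Icc 1 m, ∑ v ∈ Finset.Icc 1 m, (8 * (m : ℝ) / b ^ 6) := by
        apply Finset.sum_le_sum
        intro u hu
        apply Finset.sum_le_sum
        intro v hv
        exact key u hu v hv
    _ = (m : ℝ) * ((m : ℝ) * (8 * (m : ℝ) / b ^ 6)) := by
        rw [Finset.sum_const, Finset.sum_const, Nat.card_Icc]
        simp [nsmul_eq_mul]
    _ = 8 * (m : ℝ)^3 / b ^ 6 := by ring

lemma term_nonneg (b : ℝ) (m u v : ℕ) :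
    0 ≤ (if u + v ≤ m then
      ((m : ℝ) - (u : ℝ) - (v : ℝ)) / ((u : ℝ) * v * (u + v)) *
        nuFn (b * Real.sqrt ((u : ℝ) / ((v : ℝ) * ((u : ℝ) + v)))) *
        nuFn (b * Real.sqrt ((v : ℝ) / ((u : ℝ) * ((u : ℝ) + v)))) *
        nuFn (b * Real.sqrt (((u : ℝ) + v) / ((u : ℝ) * v)))
    else 0) := by
  split
  · have hm : (u : ℝ) + v ≤ (m : ℝ) := by exact_mod_cast (by assumption : u + v ≤ m)
    have c0 : 0 ≤ ((m : ℝ) - u - v) / ((u : ℝ) * v * (u + v)) := by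
      apply div_nonneg _ (by positivity)
      linarith
    have := nuFn_nonneg (b * Real.sqrt ((u : ℝ) / ((v : ℝ) * ((u : ℝ) + v))))
    have := nuFn_nonneg (b * Real.sqrt ((v : ℝ) / ((u : ℝ) * ((u : ℝ) + v))))
    have := nuFn_nonneg (b * Real.sqrt (((u : ℝ) + v) / ((u : ℝ) * v)))
    positivity
  · exact le_refl 0

lemma dsum_ge {c₁ c₂ b δ : ℝ} {m : ℕ} (hc₁ : 0 < c₁) (hb : 0 < b) (hm16 : 16 ≤ m)
    (hmc₁ : c₁ * b ^ 2 ≤ (m : ℝ)) (hmc₂ : (m : ℝ) ≤ c₂ * b ^ 2)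
    (hδ0 : 0 < δ)
    (hδ : ∀ x : ℝ, Real.sqrt c₂⁻¹ ≤ x → x ≤ Real.sqrt (64 / c₁) → δ ≤ nuFn x) :
    δ ^ 3 / 4 ≤ dsum b m := by
  set k : ℕ := m / 8 with hk
  have hk2 : 2 ≤ k := by omega
  have h8k : 8 * k ≤ m := by omega
  have hm16k : m ≤ 16 * k := by omega
  set kR : ℝ := (k : ℝ) with hkR
  have hkR2 : (2:ℝ) ≤ kR := by rw [hkR]; exact_mod_cast hk2
  have hkR0 : 0 < kR := by linarith
  have h8kR : 8 * kR ≤ (m : ℝ) := by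
    rw [hkR]; exact_mod_cast h8k
  have hm16kR : (m : ℝ) ≤ 16 * kR := by
    rw [hkR]; exact_mod_cast hm16k
  have hm0 : (0:ℝ) < (m : ℝ) := by linarith
  clear_value kR
  have hc₂0 : 0 < c₂ := by nlinarith
  -- the key pointwise bound on nuFn arguments
  have key : ∀ r : ℝ, 1 / (8 * kR) ≤ r → r ≤ 4 / kR → δ ≤ nuFn (b * Real.sqrt r) := by
    intro r hr1 hr2
    have hr0 : 0 < r := lt_of_lt_of_le (by positivity) hr1
    have hbr : b * Real.sqrt r = Real.sqrt (b^2 * r) := by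
      rw [Real.sqrt_mul (sq_nonneg b), Real.sqrt_sq hb.le]
    rw [hbr]
    apply hδ
    · apply Real.sqrt_le_sqrt
      -- c₂⁻¹ ≤ b^2 * r
      have h1 : b^2 * (1/(8*kR)) ≤ b^2 * r := mul_le_mul_of_nonneg_left hr1 (sq_nonneg b)
      have h2 : c₂⁻¹ ≤ b^2 * (1/(8*kR)) := by
        rw [inv_eq_one_div, div_le_iff₀ hc₂0, mul_one_div, div_mul_eq_mul_div,
          le_div_iff₀ (by positivity)]
        nlinarith
      linarith
    · apply Real.sqrt_le_sqrt
      -- b^2 * r ≤ 64 / c₁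
      have h1 : b^2 * r ≤ b^2 * (4 / kR) :=
        mul_le_mul_of_nonneg_left hr2 (sq_nonneg b)
      have h2 : b^2 * (4 / kR) ≤ 64 / c₁ := by
        rw [mul_div_assoc']
        rw [div_le_div_iff₀ hkR0 hc₁]
        -- b^2 * 4 * c₁ ≤ 64 * kR ; c₁ b² ≤ m ≤ 16 kR
        nlinarith
      linarith
  -- lower bound each term on the sub-grid
  have grid : ∀ u ∈ Finset.Icc k (2*k), ∀ v ∈ Finset.Icc k (2*k),
      (m : ℝ) / (32 * kR^3) * δ * δ * δ ≤
      (if u + v ≤ m then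
        ((m : ℝ) - (u : ℝ) - (v : ℝ)) / ((u : ℝ) * v * (u + v)) *
          nuFn (b * Real.sqrt ((u : ℝ) / ((v : ℝ) * ((u : ℝ) + v)))) *
          nuFn (b * Real.sqrt ((v : ℝ) / ((u : ℝ) * ((u : ℝ) + v)))) *
          nuFn (b * Real.sqrt (((u : ℝ) + v) / ((u : ℝ) * v)))
      else 0) := by
    intro u hu v hv
    rw [Finset.mem_Icc] at hu hv
    have hcond : u + v ≤ m := by omega
    rw [if_pos hcond]
    set U := (u : ℝ) with hU
    set V := (v : ℝ) with hV
    have hUk1 : kR ≤ U := by rw [hU, hkR]; exact_mod_cast hu.1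
    have hUk2 : U ≤ 2 * kR := by rw [hU, hkR]; exact_mod_cast hu.2
    have hVk1 : kR ≤ V := by rw [hV, hkR]; exact_mod_cast hv.1
    have hVk2 : V ≤ 2 * kR := by rw [hV, hkR]; exact_mod_cast hv.2
    clear_value U V
    have hU0 : 0 < U := by linarith
    have hV0 : 0 < V := by linarith
    have hW : U + V ≤ 4 * kR := by linarith
    have hW2 : 2 * kR ≤ U + V := by linarith
    have hVW : V * (U + V) ≤ 8 * kR^2 := by
      nlinarith [mul_le_mul hVk2 hW (by linarith : (0:ℝ) ≤ U + V) (by positivity : (0:ℝ) ≤ 2*kR)]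
    have hVW2 : 2 * kR^2 ≤ V * (U + V) := by
      nlinarith [mul_le_mul hVk1 hW2 (by positivity : (0:ℝ) ≤ 2*kR) (by linarith : (0:ℝ) ≤ V)]
    have hUW : U * (U + V) ≤ 8 * kR^2 := by
      nlinarith [mul_le_mul hUk2 hW (by linarith : (0:ℝ) ≤ U + V) (by positivity : (0:ℝ) ≤ 2*kR)]
    have hUW2 : 2 * kR^2 ≤ U * (U + V) := by
      nlinarith [mul_le_mul hUk1 hW2 (by positivity : (0:ℝ) ≤ 2*kR) (by linarith : (0:ℝ) ≤ U)]
    have hUV : U * V ≤ 4 * kR^2 := by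
      nlinarith [mul_le_mul hUk2 hVk2 (by linarith : (0:ℝ) ≤ V) (by positivity : (0:ℝ) ≤ 2*kR)]
    have hUV2 : kR^2 ≤ U * V := by
      nlinarith [mul_le_mul hUk1 hVk1 (by positivity : (0:ℝ) ≤ kR) (by linarith : (0:ℝ) ≤ U)]
    have hcoeff : (m : ℝ) / (32 * kR^3) ≤ ((m : ℝ) - U - V) / (U * V * (U + V)) := by
      rw [div_le_div_iff₀ (by positivity) (by positivity)]
      have e1 : U * V * (U + V) ≤ 16 * kR^3 := by
        nlinarith [mul_le_mul hUV hW (by linarith : (0:ℝ) ≤ U + V)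
          (by positivity : (0:ℝ) ≤ 4*kR^2)]
      have e2 : (m:ℝ)/2 ≤ (m : ℝ) - U - V := by linarith
      nlinarith [mul_le_mul_of_nonneg_left e1 hm0.le,
        mul_le_mul_of_nonneg_right e2 (by positivity : (0:ℝ) ≤ 32*kR^3)]
    have harg1 : δ ≤ nuFn (b * Real.sqrt (U / (V * (U + V)))) := by
      apply key
      · rw [div_le_div_iff₀ (by positivity) (by positivity)]
        nlinarith [mul_le_mul_of_nonneg_right hUk1 (by positivity : (0:ℝ) ≤ 8*kR)]
      · rw [div_le_div_iff₀ (by positivity) hkR0]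
        nlinarith [mul_le_mul_of_nonneg_right hUk2 hkR0.le]
    have harg2 : δ ≤ nuFn (b * Real.sqrt (V / (U * (U + V)))) := by
      apply key
      · rw [div_le_div_iff₀ (by positivity) (by positivity)]
        nlinarith [mul_le_mul_of_nonneg_right hVk1 (by positivity : (0:ℝ) ≤ 8*kR)]
      · rw [div_le_div_iff₀ (by positivity) hkR0]
        nlinarith [mul_le_mul_of_nonneg_right hVk2 hkR0.le]
    have harg3 : δ ≤ nuFn (b * Real.sqrt ((U + V) / (U * V))) := by
      apply key
      · rw [div_le_div_iff₀ (by positivity) (by positivity)]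
        nlinarith [mul_le_mul_of_nonneg_right hW2 (by positivity : (0:ℝ) ≤ 8*kR)]
      · rw [div_le_div_iff₀ (by positivity) hkR0]
        nlinarith [mul_le_mul_of_nonneg_right hW hkR0.le]
    have hnn : 0 ≤ ((m:ℝ) - U - V) / (U * V * (U + V)) := le_trans (by positivity) hcoeff
    gcongr ?_ * ?_ * ?_ * ?_ <;>
      first
        | exact hcoeff
        | assumption
        | exact mul_nonneg (mul_nonneg hnn (nuFn_nonneg _)) (nuFn_nonneg _)
        | exact mul_nonneg hnn (nuFn_nonneg _)
        | exact hnn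
        | positivity
  -- sum over the sub-grid
  have hsubset : ∀ u ∈ Finset.Icc k (2*k), u ∈ Finset.Icc 1 m := by
    intro u hu
    rw [Finset.mem_Icc] at hu ⊢
    omega
  have step1 : ∑ u ∈ Finset.Icc k (2*k), ∑ v ∈ Finset.Icc k (2*k),
      (if u + v ≤ m then
        ((m : ℝ) - (u : ℝ) - (v : ℝ)) / ((u : ℝ) * v * (u + v)) *
          nuFn (b * Real.sqrt ((u : ℝ) / ((v : ℝ) * ((u : ℝ) + v)))) *
          nuFn (b * Real.sqrt ((v : ℝ) / ((u : ℝ) * ((u : ℝ) + v)))) *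
          nuFn (b * Real.sqrt (((u : ℝ) + v) / ((u : ℝ) * v)))
      else 0) ≤ dsum b m := by
    rw [dsum, ← Finset.sum_product', ← Finset.sum_product']
    apply Finset.sum_le_sum_of_subset_of_nonneg
    · apply Finset.product_subset_product <;> · intro u hu; exact hsubset u hu
    · intro p _ _
      exact term_nonneg b m p.1 p.2
  have step2 : ((k+1 : ℕ) : ℝ)^2 * ((m : ℝ) / (32 * kR^3) * δ * δ * δ) ≤
      ∑ u ∈ Finset.Icc k (2*k), ∑ v ∈ Finset.Icc k (2*k),
      (if u + v ≤ m then
        ((m : ℝ) - (u : ℝ) - (v : ℝ)) / ((u : ℝ) * v * (u + v)) *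
          nuFn (b * Real.sqrt ((u : ℝ) / ((v : ℝ) * ((u : ℝ) + v)))) *
          nuFn (b * Real.sqrt ((v : ℝ) / ((u : ℝ) * ((u : ℝ) + v)))) *
          nuFn (b * Real.sqrt (((u : ℝ) + v) / ((u : ℝ) * v)))
      else 0) := by
    calc ((k+1 : ℕ) : ℝ)^2 * ((m : ℝ) / (32 * kR^3) * δ * δ * δ)
        = ∑ u ∈ Finset.Icc k (2*k), ∑ v ∈ Finset.Icc k (2*k),
            ((m : ℝ) / (32 * kR^3) * δ * δ * δ) := by
          rw [Finset.sum_const, Finset.sum_const, Nat.card_Icc]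
          have : 2 * k + 1 - k = k + 1 := by omega
          rw [this]
          simp [nsmul_eq_mul]
          ring
      _ ≤ _ := by
          apply Finset.sum_le_sum
          intro u hu
          apply Finset.sum_le_sum
          intro v hv
          exact grid u hu v hv
  have hkk1 : kR^2 ≤ ((k+1 : ℕ) : ℝ)^2 := by
    have : kR ≤ ((k+1 : ℕ) : ℝ) := by push_cast; linarith
    nlinarith
  have final : δ ^ 3 / 4 ≤ ((k+1 : ℕ) : ℝ)^2 * ((m : ℝ) / (32 * kR^3) * δ * δ * δ) := by
    have h1 : kR^2 * ((m : ℝ) / (32 * kR^3) * δ * δ * δ) ≤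
        ((k+1 : ℕ) : ℝ)^2 * ((m : ℝ) / (32 * kR^3) * δ * δ * δ) := by
      apply mul_le_mul_of_nonneg_right hkk1 (by positivity)
    have h2 : kR^2 * ((m : ℝ) / (32 * kR^3) * δ * δ * δ) = (m : ℝ) / (32 * kR) * δ^3 := by
      field_simp
    have h3 : δ ^ 3 / 4 ≤ (m : ℝ) / (32 * kR) * δ^3 := by
      have : (1:ℝ)/4 ≤ (m : ℝ) / (32 * kR) := by
        rw [div_le_div_iff₀ (by norm_num) (by positivity)]
        linarith
      calc δ ^ 3 / 4 = (1/4) * δ^3 := by ring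
        _ ≤ (m : ℝ) / (32 * kR) * δ^3 := by
            apply mul_le_mul_of_nonneg_right this (by positivity)
    linarith
  linarith


lemma stdNormalPDF_nonneg (x : ℝ) : 0 ≤ stdNormalPDF x := by
  unfold stdNormalPDF; positivity

lemma tendsto_pow5_pdf : Tendsto (fun x : ℝ => x^5 * stdNormalPDF x) atTop (nhds 0) := by
  apply squeeze_zero'
  · filter_upwards [eventually_ge_atTop (0:ℝ)] with x hx
    have := stdNormalPDF_nonneg x
    positivity
  · filter_upwards [eventually_ge_atTop (2:ℝ)] with x hx
    have hx0 : (0:ℝ) ≤ x := by linarith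
    have h2 : stdNormalPDF x ≤ Real.exp (-x) := by
      unfold stdNormalPDF
      have hs : (1:ℝ) ≤ Real.sqrt (2 * Real.pi) := by
        rw [show (1:ℝ) = Real.sqrt 1 by simp]
        apply Real.sqrt_le_sqrt
        nlinarith [Real.pi_gt_three]
      calc Real.exp (-x ^ 2 / 2) / Real.sqrt (2 * Real.pi) ≤ Real.exp (-x^2/2) / 1 := by
            apply div_le_div_of_nonneg_left (Real.exp_nonneg _) one_pos hs
        _ = Real.exp (-x^2/2) := by rw [div_one]
        _ ≤ Real.exp (-x) := by
            apply Real.exp_le_exp.mpr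
            nlinarith
    calc x^5 * stdNormalPDF x ≤ x^5 * Real.exp (-x) :=
          mul_le_mul_of_nonneg_left h2 (by positivity)
      _ = x^5 * Real.exp (-x) := rfl
  · exact Real.tendsto_pow_mul_exp_neg_atTop_nhds_zero 5

/-- in the regime `c₁ b² ≤ m ≤ c₂ b²`, the approximating quantity `p(b,m)`
is of exact order `b⁵ φ(b)`, and in particular tends to `0` as `b → ∞`. -/
theorem statement10
    (c₁ c₂ : ℝ) (hc₁ : 0 < c₁) (hc₁₂ : c₁ ≤ c₂) :
    (∃ C₁ C₂ b₀ : ℝ, 0 < C₁ ∧ C₁ ≤ C₂ ∧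
      ∀ b : ℝ, b₀ ≤ b → ∀ m : ℕ,
        c₁ * b ^ 2 ≤ (m : ℝ) → (m : ℝ) ≤ c₂ * b ^ 2 →
          C₁ * b ^ 5 * stdNormalPDF b ≤ rhs21 b m ∧
            rhs21 b m ≤ C₂ * b ^ 5 * stdNormalPDF b) ∧
    ∀ (b : ℕ → ℝ) (m : ℕ → ℕ), Tendsto b atTop atTop →
      (∀ ℓ, c₁ * (b ℓ) ^ 2 ≤ (m ℓ : ℝ) ∧ (m ℓ : ℝ) ≤ c₂ * (b ℓ) ^ 2) →
      Tendsto (fun ℓ => rhs21 (b ℓ) (m ℓ)) atTop (nhds 0) := by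
  have hc₂0 : 0 < c₂ := lt_of_lt_of_le hc₁ hc₁₂
  have ha : 0 < Real.sqrt c₂⁻¹ := Real.sqrt_pos.mpr (inv_pos.mpr hc₂0)
  have haA : Real.sqrt c₂⁻¹ ≤ Real.sqrt (64 / c₁) := by
    apply Real.sqrt_le_sqrt
    have h1 : c₂⁻¹ ≤ c₁⁻¹ := inv_anti₀ hc₁ hc₁₂
    have h2 : c₁⁻¹ ≤ 64 / c₁ := by
      rw [inv_eq_one_div, div_le_div_iff₀ hc₁ hc₁]
      nlinarith
    linarith
  obtain ⟨δ, hδ0, hδ⟩ := nuFn_lower _ _ ha haA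
  have main : ∃ C₁ C₂ b₀ : ℝ, 0 < C₁ ∧ C₁ ≤ C₂ ∧
      ∀ b : ℝ, b₀ ≤ b → ∀ m : ℕ,
        c₁ * b ^ 2 ≤ (m : ℝ) → (m : ℝ) ≤ c₂ * b ^ 2 →
          C₁ * b ^ 5 * stdNormalPDF b ≤ rhs21 b m ∧
            rhs21 b m ≤ C₂ * b ^ 5 * stdNormalPDF b := by
    refine ⟨δ^3/16, max (2*c₂^3) (δ^3/16), max 1 (4 / Real.sqrt c₁), by positivity,
      le_max_right _ _, ?_⟩
    intro b hb m h₁ h₂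
    have hb1 : (1:ℝ) ≤ b := le_trans (le_max_left _ _) hb
    have hb0 : 0 < b := lt_of_lt_of_le one_pos hb1
    have hsc₁ : 0 < Real.sqrt c₁ := Real.sqrt_pos.mpr hc₁
    have hb4 : 4 / Real.sqrt c₁ ≤ b := le_trans (le_max_right _ _) hb
    have hm16R : (16:ℝ) ≤ (m : ℝ) := by
      have h4 : 4 ≤ b * Real.sqrt c₁ := by
        rw [div_le_iff₀ hsc₁] at hb4
        linarith
      have hsq : Real.sqrt c₁ ^ 2 = c₁ := Real.sq_sqrt hc₁.le
      nlinarith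
    have hm16 : 16 ≤ m := by exact_mod_cast hm16R
    have hP : 0 ≤ stdNormalPDF b := stdNormalPDF_nonneg b
    have hrhs : rhs21 b m = (1/4) * (b^5 * stdNormalPDF b) * dsum b m := by
      rw [rhs21_eq, chiSq_eq hb0]
      field_simp
    have hlow : δ^3/4 ≤ dsum b m := dsum_ge hc₁ hb0 hm16 h₁ h₂ hδ0 hδ
    have hup : dsum b m ≤ 8 * c₂^3 := by
      have h3 : (m:ℝ)^3 ≤ (c₂ * b^2)^3 :=
        pow_le_pow_left₀ (Nat.cast_nonneg m) h₂ 3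
      calc dsum b m ≤ 8 * (m : ℝ)^3 / b ^ 6 := dsum_le hb0 m
        _ ≤ 8 * c₂^3 := by
            rw [div_le_iff₀ (by positivity)]
            nlinarith
    constructor
    · calc δ^3/16 * b ^ 5 * stdNormalPDF b
          = (1/4) * (b^5 * stdNormalPDF b) * (δ^3/4) := by ring
        _ ≤ (1/4) * (b^5 * stdNormalPDF b) * dsum b m :=
            mul_le_mul_of_nonneg_left hlow (by positivity)
        _ = rhs21 b m := hrhs.symm
    · calc rhs21 b m = (1/4) * (b^5 * stdNormalPDF b) * dsum b m := hrhs
        _ ≤ (1/4) * (b^5 * stdNormalPDF b) * (8 * c₂^3) :=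
            mul_le_mul_of_nonneg_left hup (by positivity)
        _ = (2*c₂^3) * b^5 * stdNormalPDF b := by ring
        _ ≤ max (2*c₂^3) (δ^3/16) * b^5 * stdNormalPDF b := by
            apply mul_le_mul_of_nonneg_right _ hP
            apply mul_le_mul_of_nonneg_right (le_max_left _ _) (by positivity)
  refine ⟨main, ?_⟩
  obtain ⟨C₁, C₂, b₀, hC₁, hC₁₂, hmain⟩ := main
  intro b m hbT hm
  have hC : ∀ C : ℝ, Tendsto (fun ℓ => C * (b ℓ)^5 * stdNormalPDF (b ℓ)) atTop (nhds 0) := by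
    intro C
    have h1 := (tendsto_pow5_pdf.comp hbT).const_mul C
    rw [mul_zero] at h1
    convert h1 using 2 with ℓ
    simp [Function.comp]
    ring
  apply tendsto_of_tendsto_of_tendsto_of_le_of_le' (hC C₁) (hC C₂)
  · filter_upwards [hbT.eventually_ge_atTop b₀] with ℓ hℓ
    exact (hmain (b ℓ) hℓ (m ℓ) (hm ℓ).1 (hm ℓ).2).1
  · filter_upwards [hbT.eventually_ge_atTop b₀] with ℓ hℓ
    exact (hmain (b ℓ) hℓ (m ℓ) (hm ℓ).1 (hm ℓ).2).2

end
end

section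
/- Let 0 = τ₀ < τ₁ < ⋯ < τ_M < τ_{M+1} = m be integers and μ₁,…,μ_{M+1} ∈ ℝ. Let X₁,…,X_m be independent with X_i ~ N(μ_n, 1) for τ_{n−1} < i ≤ τ_n, and let X'₁,…,X'_m be i.i.d. N(0,1). Then for every b > 0: P( max_{0 ≤ n ≤ M} max_{τ_n ≤ i < j < k ≤ τ_{n+1}} |Z_{i,j,k}(X)| ≥ b ) ≤ P( max_{0 ≤ i < j < k ≤ m} |Z_{i,j,k}(X')| ≥ b ); that is, the within-segment maximum of the statistic under the change-point model is stochastically dominated by the unrestricted maximum under the no-change model. -/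
open MeasureTheory ProbabilityTheory Filter Finset

noncomputable section

/-- `Zstat` only depends on the values on `[1,k]`. -/
lemma Zstat_congr (x y : ℕ → ℝ) (i j k : ℕ) (hik : i ≤ k) (hjk : j ≤ k)
    (h : ∀ l, 1 ≤ l → l ≤ k → x l = y l) : Zstat x i j k = Zstat y i j k := by
  have hps : ∀ a, a ≤ k → partialSum x a = partialSum y a := by
    intro a ha
    refine Finset.sum_congr rfl fun l hl => ?_
    simp only [Finset.mem_range] at hl
    exact h (l + 1) (by omega) (by omega)
  unfold Zstat
  rw [hps j hjk, hps i hik, hps k le_rfl]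

/-- `Zstat` is invariant under adding a constant to the entries in `(i,k]`. -/
lemma Zstat_add_shift (x c : ℕ → ℝ) (c0 : ℝ) (i j k : ℕ) (hij : i < j) (hjk : j < k)
    (hc : ∀ l, i < l → l ≤ k → c l = c0) :
    Zstat (fun l => x l + c l) i j k = Zstat x i j k := by
  have hik : i < k := hij.trans hjk
  have hki : ((k : ℝ) - (i : ℝ)) ≠ 0 := by
    have : (i : ℝ) < (k : ℝ) := by exact_mod_cast hik
    linarith
  have hsum : ∀ b, i ≤ b → b ≤ k →
      partialSum (fun l => x l + c l) b - partialSum (fun l => x l + c l) i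
        = partialSum x b - partialSum x i + ((b : ℝ) - (i : ℝ)) * c0 := by
    intro b hib hbk
    have h1 : ∀ (z : ℕ → ℝ), partialSum z b - partialSum z i
        = ∑ l ∈ Finset.Ico i b, z (l + 1) := by
      intro z
      rw [Finset.sum_Ico_eq_sub _ hib]
      rfl
    rw [h1, h1]
    have h2 : ∑ l ∈ Finset.Ico i b, (x (l + 1) + c (l + 1))
        = (∑ l ∈ Finset.Ico i b, x (l + 1)) + ∑ l ∈ Finset.Ico i b, c (l + 1) := by
      rw [Finset.sum_add_distrib]
    rw [h2]
    have h3 : ∑ l ∈ Finset.Ico i b, c (l + 1) = ((b : ℝ) - (i : ℝ)) * c0 := by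
      have : ∀ l ∈ Finset.Ico i b, c (l + 1) = c0 := by
        intro l hl
        simp only [Finset.mem_Ico] at hl
        exact hc (l + 1) (by omega) (by omega)
      rw [Finset.sum_congr rfl this, Finset.sum_const, Nat.card_Ico, nsmul_eq_mul,
        Nat.cast_sub hib]
    rw [h3]
  unfold Zstat
  rw [hsum j hij.le hjk.le, hsum k hik.le le_rfl]
  congr 1
  field_simp
  ring

/-- Extend a finite vector to `ℕ → ℝ`, with `y i` placed at index `i+1`. -/
def extVec (m : ℕ) (y : Fin m → ℝ) : ℕ → ℝ :=
  fun l => if h : l - 1 < m ∧ 1 ≤ l then y ⟨l - 1, h.1⟩ else 0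

lemma extVec_eq (m : ℕ) (y : Fin m → ℝ) (i : Fin m) : extVec m y (i + 1) = y i := by
  unfold extVec
  have h : (i : ℕ) + 1 - 1 < m ∧ 1 ≤ (i : ℕ) + 1 := ⟨by simpa using i.isLt, by omega⟩
  simp [h]

lemma measurable_Zstat_extVec (m i j k : ℕ) :
    Measurable (fun y : Fin m → ℝ => Zstat (extVec m y) i j k) := by
  have hps : ∀ a : ℕ, Measurable (fun y : Fin m → ℝ => partialSum (extVec m y) a) := by
    intro a
    unfold partialSum
    refine Finset.measurable_sum (f := fun l (y : Fin m → ℝ) => extVec m y (l + 1)) _ fun l _ => ?_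
    unfold extVec
    by_cases h : l + 1 - 1 < m ∧ 1 ≤ l + 1
    · simp only [dif_pos h]
      exact measurable_pi_apply _
    · simp only [dif_neg h]
      exact measurable_const
  unfold Zstat
  exact (((hps j).sub (hps i)).sub
    ((((hps k).sub (hps i)).const_mul _).div_const _)).div_const _

/-- Joint law of independent coordinates is the product measure. -/
lemma map_succ_pi {Ω : Type*} [MeasurableSpace Ω] (P : Measure Ω) [IsProbabilityMeasure P]
    (m : ℕ) (f : ℕ → Ω → ℝ) (hf : ∀ i, Measurable (f i))
    (hind : iIndepFun f P) :
    P.map (fun ω (i : Fin m) => f ((i : ℕ) + 1) ω)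
      = Measure.pi (fun i : Fin m => P.map (f ((i : ℕ) + 1))) := by
  haveI : ∀ i : Fin m, IsProbabilityMeasure (P.map (f ((i : ℕ) + 1))) :=
    fun i => Measure.isProbabilityMeasure_map (hf _).aemeasurable
  refine (Measure.pi_eq fun s hs => ?_).symm
  rw [Measure.map_apply (measurable_pi_lambda _ fun i => hf _) (MeasurableSet.univ_pi hs)]
  set sets : ℕ → Set ℝ := fun n => if h : n - 1 < m ∧ 1 ≤ n then s ⟨n - 1, h.1⟩ else Set.univ
    with hsets
  have hsets_meas : ∀ n, MeasurableSet (sets n) := by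
    intro n
    by_cases h : n - 1 < m ∧ 1 ≤ n
    · simpa [hsets, h] using hs _
    · simp [hsets, h]
  have hsets_succ : ∀ i : Fin m, sets ((i : ℕ) + 1) = s i := by
    intro i
    have h : (i : ℕ) + 1 - 1 < m ∧ 1 ≤ (i : ℕ) + 1 := ⟨by simpa using i.isLt, by omega⟩
    simp [hsets, h]
  have hpre : (fun ω (i : Fin m) => f ((i : ℕ) + 1) ω) ⁻¹' Set.pi Set.univ s
      = ⋂ n ∈ Finset.Icc 1 m, f n ⁻¹' sets n := by
    ext ω
    simp only [Set.mem_preimage, Set.mem_pi, Set.mem_univ, true_implies, Set.mem_iInter,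
      Finset.mem_Icc]
    constructor
    · rintro h n ⟨h1, h2⟩
      have hn : n - 1 < m := by omega
      have := h ⟨n - 1, hn⟩
      simp only [hsets]
      rw [dif_pos ⟨hn, h1⟩]
      simpa [Nat.sub_add_cancel h1] using this
    · intro h i
      have := h ((i : ℕ) + 1) ⟨by omega, by have := i.isLt; omega⟩
      rwa [hsets_succ i] at this
  rw [hpre, hind.measure_inter_preimage_eq_mul (Finset.Icc 1 m) (fun n _ => hsets_meas n)]
  have hIcc : Finset.Icc 1 m = (Finset.range m).map ⟨Nat.succ, Nat.succ_injective⟩ := by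
    ext a
    simp only [Finset.mem_Icc, Finset.mem_map, Finset.mem_range, Function.Embedding.coeFn_mk, Nat.succ_eq_add_one]
    constructor
    · rintro ⟨h1, h2⟩; exact ⟨a - 1, by omega, by omega⟩
    · rintro ⟨x, hx, rfl⟩; omega
  rw [hIcc, Finset.prod_map]
  have : ∀ i : Fin m, (P.map (f ((i : ℕ) + 1))) (s i) = P (f ((i : ℕ) + 1) ⁻¹' sets ((i:ℕ)+1)) := by
    intro i
    rw [Measure.map_apply (hf _) (hs i), hsets_succ]
  simp only [this]
  exact (Fin.prod_univ_eq_prod_range (fun l => P (f (l + 1) ⁻¹' sets (l + 1))) m).symm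

/-- the within-segment maximum of `|Z_{i,j,k}|` under the change-point model
is stochastically dominated by the unrestricted maximum under the no-change model. -/
theorem statement14
    (M m : ℕ) (τ : ℕ → ℕ) (hτ0 : τ 0 = 0) (hτlast : τ (M + 1) = m)
    (hτmono : ∀ n ≤ M, τ n < τ (n + 1))
    (μ : ℕ → ℝ)
    (Ω : Type*) [MeasurableSpace Ω] (P : Measure Ω) [IsProbabilityMeasure P]
    (X : ℕ → Ω → ℝ)
    (hmeas : ∀ i, Measurable (X i))
    (hindep : iIndepFun X P)
    (hlaw : ∀ n i, n + 1 ≤ M + 1 → τ n < i → i ≤ τ (n + 1) → P.map (X i) = gaussianReal (μ (n + 1)) 1)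
    (Ω' : Type*) [MeasurableSpace Ω'] (P' : Measure Ω') [IsProbabilityMeasure P']
    (X' : ℕ → Ω' → ℝ)
    (hmeas' : ∀ i, Measurable (X' i))
    (hindep' : iIndepFun X' P')
    (hlaw' : ∀ i, 1 ≤ i → i ≤ m → P'.map (X' i) = gaussianReal 0 1)
    (b : ℝ) (hb : 0 < b) :
    P {ω | ∃ n ≤ M, ∃ i j k : ℕ, τ n ≤ i ∧ i < j ∧ j < k ∧ k ≤ τ (n + 1) ∧
        b ≤ |Zstat (fun l => X l ω) i j k|} ≤
      P' {ω | ∃ i j k : ℕ, i < j ∧ j < k ∧ k ≤ m ∧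
        b ≤ |Zstat (fun l => X' l ω) i j k|} := by
  -- monotonicity of τ
  have τmono : ∀ b ≤ M + 1, ∀ a ≤ b, τ a ≤ τ b := by
    intro b
    induction b with
    | zero => intro _ a ha; simp [Nat.le_zero.mp ha]
    | succ n ih =>
      intro hb a ha
      rcases Nat.eq_or_lt_of_le ha with rfl | h
      · exact le_rfl
      · exact le_trans (ih (by omega) a (by omega)) (hτmono n (by omega)).le
  -- every index in [1, m] belongs to a segment
  have seg : ∀ i, 1 ≤ i → i ≤ m → ∃ n, n ≤ M ∧ τ n < i ∧ i ≤ τ (n + 1) := by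
    intro i h1 h2
    have key : ∀ N, N ≤ M → i ≤ τ (N + 1) → ∃ n, n ≤ M ∧ τ n < i ∧ i ≤ τ (n + 1) := by
      intro N
      induction N with
      | zero => intro _ h; exact ⟨0, by omega, by rw [hτ0]; omega, h⟩
      | succ N ih =>
        intro hN h
        by_cases hc : τ (N + 1) < i
        · exact ⟨N + 1, hN, hc, h⟩
        · exact ih (by omega) (by omega)
    exact key M le_rfl (by rw [hτlast]; exact h2)
  -- the shift function
  set σ : ℕ → ℝ := fun i => μ (((Finset.range (M + 1)).filter (fun n' => τ n' < i)).card)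
    with hσdef
  have hσval : ∀ n i, n ≤ M → τ n < i → i ≤ τ (n + 1) → σ i = μ (n + 1) := by
    intro n i hn h1 h2
    have hfe : (Finset.range (M + 1)).filter (fun n' => τ n' < i) = Finset.range (n + 1) := by
      ext n'
      simp only [Finset.mem_filter, Finset.mem_range]
      constructor
      · rintro ⟨hlt, hτlt⟩
        by_contra hc
        push_neg at hc
        have : τ (n + 1) ≤ τ n' := τmono n' (by omega) (n + 1) hc
        omega
      · intro h
        refine ⟨by omega, lt_of_le_of_lt (τmono n (by omega) n' (by omega)) h1⟩
    rw [hσdef]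
    simp only
    rw [hfe, Finset.card_range]
  -- the shifted process
  set Y : ℕ → Ω → ℝ := fun l ω => X l ω - σ l with hYdef
  have hYmeas : ∀ l, Measurable (Y l) := fun l => (hmeas l).sub measurable_const
  have hYindep : iIndepFun Y P := by
    have := hindep.comp (fun l => fun t => t - σ l) (fun l => measurable_sub_const (σ l))
    exact this
  have hYlaw : ∀ i, 1 ≤ i → i ≤ m → P.map (Y i) = gaussianReal 0 1 := by
    intro i h1 h2
    obtain ⟨n, hn, ha, hbn⟩ := seg i h1 h2
    have hXi := hlaw n i (by omega) ha hbn
    have hcomp : Y i = (fun t => t + (-σ i)) ∘ X i := by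
      funext ω; simp [hYdef, sub_eq_add_neg]
    rw [hcomp, ← Measure.map_map (measurable_add_const _) (hmeas i), hXi,
      gaussianReal_map_add_const, hσval n i hn ha hbn]
    simp
  -- the target sets in the product space
  set T : Set (Fin m → ℝ) := {y | ∃ i j k : ℕ, i < j ∧ j < k ∧ k ≤ m ∧
      b ≤ |Zstat (extVec m y) i j k|} with hTdef
  set T' : Set (Fin m → ℝ) := {y | ∃ n ≤ M, ∃ i j k : ℕ, τ n ≤ i ∧ i < j ∧ j < k ∧
      k ≤ τ (n + 1) ∧ b ≤ |Zstat (extVec m y) i j k|} with hT'def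
  have hTmeas : MeasurableSet T := by
    have : T = ⋃ i, ⋃ j, ⋃ k, ⋃ (_ : i < j ∧ j < k ∧ k ≤ m),
        {y : Fin m → ℝ | b ≤ |Zstat (extVec m y) i j k|} := by
      ext y
      simp only [hTdef, Set.mem_iUnion, Set.mem_setOf_eq]
      constructor
      · rintro ⟨i, j, k, h1, h2, h3, h4⟩; exact ⟨i, j, k, ⟨h1, h2, h3⟩, h4⟩
      · rintro ⟨i, j, k, ⟨h1, h2, h3⟩, h4⟩; exact ⟨i, j, k, h1, h2, h3, h4⟩
    rw [this]
    refine MeasurableSet.iUnion fun i => .iUnion fun j => .iUnion fun k => .iUnion fun _ => ?_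
    exact measurableSet_le measurable_const (measurable_Zstat_extVec m i j k).abs
  have hT'meas : MeasurableSet T' := by
    have : T' = ⋃ n, ⋃ i, ⋃ j, ⋃ k,
        ⋃ (_ : n ≤ M ∧ τ n ≤ i ∧ i < j ∧ j < k ∧ k ≤ τ (n + 1)),
        {y : Fin m → ℝ | b ≤ |Zstat (extVec m y) i j k|} := by
      ext y
      simp only [hT'def, Set.mem_iUnion, Set.mem_setOf_eq]
      constructor
      · rintro ⟨n, hn, i, j, k, h1, h2, h3, h4, h5⟩
        exact ⟨n, i, j, k, ⟨hn, h1, h2, h3, h4⟩, h5⟩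
      · rintro ⟨n, i, j, k, ⟨hn, h1, h2, h3, h4⟩, h5⟩
        exact ⟨n, hn, i, j, k, h1, h2, h3, h4, h5⟩
    rw [this]
    refine MeasurableSet.iUnion fun n => .iUnion fun i => .iUnion fun j => .iUnion fun k =>
      .iUnion fun _ => ?_
    exact measurableSet_le measurable_const (measurable_Zstat_extVec m i j k).abs
  have hT'subT : T' ⊆ T := by
    rintro y ⟨n, hn, i, j, k, h1, h2, h3, h4, h5⟩
    refine ⟨i, j, k, h2, h3, ?_, h5⟩
    calc k ≤ τ (n + 1) := h4
      _ ≤ τ (M + 1) := τmono (M + 1) le_rfl (n + 1) (by omega)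
      _ = m := hτlast
  -- the coordinate maps
  set YV : Ω → Fin m → ℝ := fun ω i => Y ((i : ℕ) + 1) ω with hYVdef
  set XV : Ω' → Fin m → ℝ := fun ω i => X' ((i : ℕ) + 1) ω with hXVdef
  have hYVmeas : Measurable YV := measurable_pi_lambda _ fun i => hYmeas _
  have hXVmeas : Measurable XV := measurable_pi_lambda _ fun i => hmeas' _
  -- key identity: within a segment, Zstat of X agrees with Zstat of the extended Y-vector
  have key : ∀ (ω : Ω) (n i j k : ℕ), n ≤ M → τ n ≤ i → i < j → j < k → k ≤ τ (n + 1) →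
      Zstat (fun l => X l ω) i j k = Zstat (extVec m (YV ω)) i j k := by
    intro ω n i j k hn h1 h2 h3 h4
    have hkm : k ≤ m := by
      calc k ≤ τ (n + 1) := h4
        _ ≤ τ (M + 1) := τmono (M + 1) le_rfl (n + 1) (by omega)
        _ = m := hτlast
    have step1 : Zstat (fun l => X l ω) i j k = Zstat (fun l => Y l ω) i j k := by
      have hXY : (fun l => X l ω) = fun l => Y l ω + σ l := by
        funext l; simp [hYdef]
      rw [hXY]
      exact Zstat_add_shift (fun l => Y l ω) σ (μ (n + 1)) i j k h2 h3
        (fun l hl1 hl2 => hσval n l hn (by omega) (by omega))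
    have step2 : Zstat (fun l => Y l ω) i j k = Zstat (extVec m (YV ω)) i j k := by
      refine (Zstat_congr _ _ i j k (by omega) (by omega) ?_).symm
      intro l hl1 hl2
      have hlm : l ≤ m := le_trans hl2 hkm
      have h : l - 1 < m ∧ 1 ≤ l := ⟨by omega, hl1⟩
      show extVec m (YV ω) l = Y l ω
      unfold extVec
      rw [dif_pos h]
      simp only [hYVdef]
      congr 1
      omega
    rw [step1, step2]
  have key' : ∀ (ω : Ω') (i j k : ℕ), i < j → j < k → k ≤ m →
      Zstat (fun l => X' l ω) i j k = Zstat (extVec m (XV ω)) i j k := by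
    intro ω i j k h2 h3 hkm
    refine (Zstat_congr _ _ i j k (by omega) (by omega) ?_).symm
    intro l hl1 hl2
    have h : l - 1 < m ∧ 1 ≤ l := ⟨by omega, hl1⟩
    show extVec m (XV ω) l = X' l ω
    unfold extVec
    rw [dif_pos h]
    simp only [hXVdef]
    congr 1
    omega
  -- event identifications
  have hA : {ω | ∃ n ≤ M, ∃ i j k : ℕ, τ n ≤ i ∧ i < j ∧ j < k ∧ k ≤ τ (n + 1) ∧
      b ≤ |Zstat (fun l => X l ω) i j k|} = YV ⁻¹' T' := by
    ext ω
    simp only [Set.mem_setOf_eq, Set.mem_preimage, hT'def]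
    constructor
    · rintro ⟨n, hn, i, j, k, h1, h2, h3, h4, h5⟩
      exact ⟨n, hn, i, j, k, h1, h2, h3, h4, by rwa [← key ω n i j k hn h1 h2 h3 h4]⟩
    · rintro ⟨n, hn, i, j, k, h1, h2, h3, h4, h5⟩
      exact ⟨n, hn, i, j, k, h1, h2, h3, h4, by rwa [key ω n i j k hn h1 h2 h3 h4]⟩
  have hB : {ω | ∃ i j k : ℕ, i < j ∧ j < k ∧ k ≤ m ∧
      b ≤ |Zstat (fun l => X' l ω) i j k|} = XV ⁻¹' T := by
    ext ω
    simp only [Set.mem_setOf_eq, Set.mem_preimage, hTdef]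
    constructor
    · rintro ⟨i, j, k, h2, h3, h4, h5⟩
      exact ⟨i, j, k, h2, h3, h4, by rwa [← key' ω i j k h2 h3 h4]⟩
    · rintro ⟨i, j, k, h2, h3, h4, h5⟩
      exact ⟨i, j, k, h2, h3, h4, by rwa [key' ω i j k h2 h3 h4]⟩
  -- identify the two joint laws
  have hYpi : P.map YV = Measure.pi (fun _ : Fin m => gaussianReal 0 1) := by
    rw [hYVdef, map_succ_pi P m Y hYmeas hYindep]
    congr 1
    funext i
    exact hYlaw ((i : ℕ) + 1) (by omega) (by have := i.isLt; omega)
  have hXpi : P'.map XV = Measure.pi (fun _ : Fin m => gaussianReal 0 1) := by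
    rw [hXVdef, map_succ_pi P' m X' hmeas' hindep']
    congr 1
    funext i
    exact hlaw' ((i : ℕ) + 1) (by omega) (by have := i.isLt; omega)
  -- conclude
  rw [hA, hB]
  calc P (YV ⁻¹' T') = P.map YV T' := (Measure.map_apply hYVmeas hT'meas).symm
    _ ≤ P.map YV T := by rw [hYpi]; exact measure_mono hT'subT
    _ = P'.map XV T := by rw [hYpi, hXpi]
    _ = P' (XV ⁻¹' T) := Measure.map_apply hXVmeas hTmeas

end
end
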